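/- Let p be a prime, δ a power of p, q = δ^m with m ≥ 2, and u₀ ∈ U_{q+1} with u₀ ≠ 1 and u₀ ≠ -1. For c ∈ GF(δ) ⊆ GF(q), let u_c = (c + u₀^q)/(c + u₀) and a_c = (c + u₀)^{(q+1)(δ-1)}, and set u_∞ = 1, a_∞ = 1. Then for every integer e with 1 ≤ e ≤ δ - 1, Σ_{c ∈ GF(δ) ∪ {∞}} a_c · u_c^e = 0. -/

import Mathlib

open Finset Polynomial

/-- Power sums over the subfield `{x : K | x ^ δ = x}`. -/
lemma aux_pow_sum {K : Type*} [Field K] [Fintype K] [DecidableEq K]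
    (δ : ℕ) (hδ2 : 2 ≤ δ) (hdvd : δ - 1 ∣ Fintype.card K - 1) (hδ0 : (δ : K) = 0)
    (n : ℕ) (hn : n ≤ δ - 1) :
    ∑ c ∈ Finset.univ.filter (fun x : K => x ^ δ = x), c ^ n
      = if n = δ - 1 then -1 else 0 := by
  obtain ⟨g, hg⟩ := IsCyclic.exists_ofOrder_eq_natCard (α := Kˣ)
  have hcard : Nat.card Kˣ = Fintype.card K - 1 := by
    rw [Nat.card_eq_fintype_card, Fintype.card_units]
  have hcK : 2 ≤ Fintype.card K := Fintype.one_lt_card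
  obtain ⟨k, hk⟩ := hdvd
  have hk0 : 0 < k := by
    rcases Nat.eq_zero_or_pos k with h | h
    · subst h; omega
    · exact h
  set ζu := g ^ k with hζu
  have hgcd : Nat.gcd ((δ - 1) * k) k = k := by
    have := Nat.gcd_mul_right (δ - 1) k 1
    simpa using this
  have horder : orderOf ζu = δ - 1 := by
    rw [hζu, orderOf_pow, hg, hcard, hk, hgcd, Nat.mul_div_cancel _ hk0]
  have hprim : IsPrimitiveRoot ((ζu : K)) (δ - 1) := by
    rw [IsPrimitiveRoot.coe_units_iff]
    exact horder ▸ IsPrimitiveRoot.orderOf ζu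
  set ζ : K := (ζu : K) with hζdef
  have hζ1 : ζ ^ (δ - 1) = 1 := hprim.pow_eq_one
  have hζ0 : ζ ≠ 0 := Units.ne_zero ζu
  have hSeq : Finset.univ.filter (fun x : K => x ^ δ = x)
      = insert (0 : K) ((Finset.range (δ - 1)).image (ζ ^ ·)) := by
    ext x
    simp only [mem_filter, mem_univ, true_and, mem_insert, mem_image, mem_range]
    constructor
    · intro hx
      rcases eq_or_ne x 0 with h0 | h0
      · exact Or.inl h0
      · right
        have hx1 : x ^ (δ - 1) = 1 := by
          have hh : x ^ (δ - 1) * x = 1 * x := by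
            rw [one_mul, ← pow_succ]
            have hδ' : δ - 1 + 1 = δ := by omega
            rw [hδ', hx]
          exact mul_right_cancel₀ h0 hh
        haveI : NeZero (δ - 1) := ⟨by omega⟩
        obtain ⟨i, hi, hix⟩ := hprim.eq_pow_of_pow_eq_one hx1
        exact ⟨i, hi, hix⟩
    · rintro (rfl | ⟨i, hi, rfl⟩)
      · exact zero_pow (by omega)
      · show (ζ ^ i) ^ δ = ζ ^ i
        have h1 : (ζ ^ i) ^ δ = (ζ ^ i) ^ (δ - 1) * ζ ^ i := by
          rw [← pow_succ]
          congr 1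
          omega
        rw [h1, ← pow_mul, mul_comm i (δ - 1), pow_mul, hζ1, one_pow, one_mul]
  have h0notmem : (0 : K) ∉ (Finset.range (δ - 1)).image (ζ ^ ·) := by
    simp only [mem_image, mem_range, not_exists]
    rintro i ⟨hi, h⟩
    exact (pow_ne_zero i hζ0) h
  rw [hSeq, Finset.sum_insert (by simpa using h0notmem),
    Finset.sum_image (fun i hi j hj h =>
      hprim.pow_inj (mem_range.mp hi) (mem_range.mp hj) h)]
  have hswap : ∀ i, (ζ ^ i) ^ n = (ζ ^ n) ^ i := fun i => by
    rw [← pow_mul, mul_comm, pow_mul]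
  simp only [hswap]
  have hcast : ((δ - 1 : ℕ) : K) = -1 := by
    have : ((δ - 1 : ℕ) : K) = (δ : K) - 1 := by
      push_cast [Nat.cast_sub (by omega : 1 ≤ δ)]
      ring
    rw [this, hδ0]
    ring
  rcases eq_or_ne n (δ - 1) with rfl | hne
  · rw [if_pos rfl, hζ1]
    simp only [one_pow]
    rw [Finset.sum_const, Finset.card_range, nsmul_eq_mul, mul_one, hcast,
      zero_pow (by omega : δ - 1 ≠ 0), zero_add]
  · rcases eq_or_ne n 0 with rfl | hn0
    · rw [if_neg hne]
      simp only [pow_zero, one_pow]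
      rw [Finset.sum_const, Finset.card_range, nsmul_eq_mul, mul_one, hcast]
      ring
    · have hζn : ζ ^ n ≠ 1 :=
        hprim.pow_ne_one_of_pos_of_lt hn0 (lt_of_le_of_ne hn hne)
      have hgs := geom_sum_mul (ζ ^ n) (δ - 1)
      have hpow : (ζ ^ n) ^ (δ - 1) = 1 := by
        rw [← pow_mul, mul_comm, pow_mul, hζ1, one_pow]
      rw [hpow, sub_self] at hgs
      have hsum : ∑ i ∈ Finset.range (δ - 1), (ζ ^ n) ^ i = 0 := by
        rcases mul_eq_zero.mp hgs with h | h
        · exact h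
        · exact absurd (sub_eq_zero.mp h) hζn
      rw [hsum, zero_pow hn0, if_neg hne, add_zero]

/-- Sum of a monic polynomial of degree `δ - 1` over the subfield. -/
lemma aux_poly_sum {K : Type*} [Field K] [Fintype K] [DecidableEq K]
    (δ : ℕ) (hδ2 : 2 ≤ δ) (hdvd : δ - 1 ∣ Fintype.card K - 1) (hδ0 : (δ : K) = 0)
    (f : Polynomial K) (hmonic : f.Monic) (hdeg : f.natDegree = δ - 1) :
    ∑ c ∈ Finset.univ.filter (fun x : K => x ^ δ = x), f.eval c = -1 := by
  have heval : ∀ c : K, f.eval c = ∑ i ∈ Finset.range δ, f.coeff i * c ^ i := by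
    intro c
    have h1 : f.natDegree + 1 = δ := by omega
    rw [Polynomial.eval_eq_sum_range, h1]
  calc ∑ c ∈ Finset.univ.filter (fun x : K => x ^ δ = x), f.eval c
      = ∑ c ∈ Finset.univ.filter (fun x : K => x ^ δ = x),
          ∑ i ∈ Finset.range δ, f.coeff i * c ^ i := by
        exact Finset.sum_congr rfl fun c _ => heval c
    _ = ∑ i ∈ Finset.range δ, f.coeff i *
          ∑ c ∈ Finset.univ.filter (fun x : K => x ^ δ = x), c ^ i := by
        rw [Finset.sum_comm]
        exact Finset.sum_congr rfl fun i _ => by rw [Finset.mul_sum]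
    _ = ∑ i ∈ Finset.range δ, f.coeff i * (if i = δ - 1 then (-1 : K) else 0) := by
        refine Finset.sum_congr rfl fun i hi => ?_
        rw [aux_pow_sum δ hδ2 hdvd hδ0 i (by have := Finset.mem_range.mp hi; omega)]
    _ = -1 := by
        simp only [mul_ite, mul_neg_one, mul_zero]
        rw [Finset.sum_ite_eq' (Finset.range δ) (δ - 1) (fun i => -f.coeff i),
          if_pos (Finset.mem_range.mpr (by omega)), ← hdeg, hmonic.coeff_natDegree]

theorem stmt_5 (p r m : ℕ) (hp : p.Prime) (hr : 0 < r) (hm : 2 ≤ m)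
    (δ q : ℕ) (hδ : δ = p ^ r) (hq : q = δ ^ m)
    (K : Type*) [Field K] [Fintype K] [DecidableEq K] (hK : Fintype.card K = q ^ 2)
    (u₀ : K) (hu₀ : u₀ ^ (q + 1) = 1) (hu₀1 : u₀ ≠ 1) (hu₀2 : u₀ ≠ -1)
    (e : ℕ) (he1 : 1 ≤ e) (he2 : e ≤ δ - 1) :
    (∑ c ∈ Finset.univ.filter (fun x : K => x ^ δ = x),
        (c + u₀) ^ ((q + 1) * (δ - 1)) * ((c + u₀ ^ q) / (c + u₀)) ^ e) + 1 = 0 := by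
  have hp2 := hp.two_le
  have hδ2 : 2 ≤ δ := by
    rw [hδ]
    calc 2 ≤ p := hp2
      _ ≤ p ^ r := Nat.le_self_pow (by omega) p
  have hq2 : 2 ≤ q := by
    rw [hq]
    calc 2 ≤ δ := hδ2
      _ ≤ δ ^ m := Nat.le_self_pow (by omega) δ
  -- characteristic
  have hcharP : CharP K p := by
    obtain ⟨p', hcp'⟩ := CharP.exists K
    haveI := hcp'
    obtain ⟨n, hp', hcard⟩ := FiniteField.card K p'
    have hK' : p ^ (r * m * 2) = p' ^ (n : ℕ) := by
      rw [← hcard, hK, hq, hδ, ← pow_mul, ← pow_mul]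
      ring
    have hpp' : p = p' := by
      have h1 : p ∣ p' ^ (n : ℕ) := hK' ▸ dvd_pow_self p (by positivity)
      exact (Nat.prime_dvd_prime_iff_eq hp hp').mp (hp.dvd_of_dvd_pow h1)
    exact hpp' ▸ hcp'
  haveI := hcharP
  haveI : Fact p.Prime := ⟨hp⟩
  have hδ0 : (δ : K) = 0 := by
    rw [hδ]
    push_cast
    rw [CharP.cast_eq_zero K p]
    exact zero_pow (by omega)
  have hdvd : δ - 1 ∣ Fintype.card K - 1 := by
    rw [hK, hq, ← pow_mul]
    simpa using Nat.sub_dvd_pow_sub_pow δ 1 (m * 2)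
  -- facts about u₀
  have hu0ne : u₀ ≠ 0 := by
    rintro rfl
    rw [zero_pow (by omega : q + 1 ≠ 0)] at hu₀
    exact zero_ne_one hu₀
  have huq : u₀ ^ q = u₀⁻¹ := by
    refine eq_inv_of_mul_eq_one_right ?_
    rw [← pow_succ']
    exact hu₀
  have hu2 : u₀ * u₀ ≠ 1 := by
    intro h
    rcases mul_self_eq_one_iff.mp h with h | h
    · exact hu₀1 h
    · exact hu₀2 h
  have huu : u₀⁻¹ ≠ u₀ := by
    intro h
    apply hu2
    have h2 := inv_mul_cancel₀ hu0ne
    rw [h] at h2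
    exact h2
  have hqpow : q = p ^ (r * m) := by rw [hq, hδ, ← pow_mul]
  -- membership facts
  have hcq : ∀ c : K, c ^ δ = c → c ^ q = c := by
    intro c h
    have key : ∀ k : ℕ, c ^ δ ^ k = c := by
      intro k
      induction k with
      | zero => simpa using rfl
      | succ k ih => rw [pow_succ, pow_mul, ih, h]
    rw [hq]
    exact key m
  have hnegq : ∀ x : K, (-x) ^ q = -(x ^ q) := by
    intro x
    rw [hqpow, neg_eq_neg_one_mul, mul_pow, neg_one_pow_char_pow K p (r * m),
      neg_one_mul]
  have hAne : ∀ c : K, c ^ δ = c → c + u₀ ≠ 0 := by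
    intro c hc hcontra
    have hcu : u₀ = -c := by linear_combination hcontra
    have h1 : u₀ ^ q = u₀ := by
      rw [hcu, hnegq, hcq c hc]
    rw [huq] at h1
    exact huu h1
  have hBne : ∀ c : K, c ^ δ = c → c + u₀⁻¹ ≠ 0 := by
    intro c hc hcontra
    have hcu : u₀⁻¹ = -c := by linear_combination hcontra
    have h1 : (u₀⁻¹) ^ q = u₀⁻¹ := by
      rw [hcu, hnegq, hcq c hc]
    rw [inv_pow, huq, inv_inv] at h1
    exact huu h1.symm
  -- the polynomial
  set f : Polynomial K :=
    (X + C u₀) ^ (δ - 1 - e) * ((X + C ((u₀⁻¹) ^ δ)) * (X + C u₀⁻¹) ^ (e - 1)) with hf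
  have hmonic : f.Monic :=
    ((monic_X_add_C u₀).pow _).mul
      ((monic_X_add_C _).mul ((monic_X_add_C _).pow _))
  have hdeg : f.natDegree = δ - 1 := by
    rw [hf, Monic.natDegree_mul ((monic_X_add_C u₀).pow _)
        ((monic_X_add_C _).mul ((monic_X_add_C _).pow _)),
      Monic.natDegree_mul (monic_X_add_C _) ((monic_X_add_C _).pow _),
      natDegree_pow, natDegree_pow, natDegree_X_add_C, natDegree_X_add_C,
      natDegree_X_add_C]
    omega
  -- term-by-term equality
  have hterm : ∀ c ∈ Finset.univ.filter (fun x : K => x ^ δ = x),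
      (c + u₀) ^ ((q + 1) * (δ - 1)) * ((c + u₀ ^ q) / (c + u₀)) ^ e = f.eval c := by
    intro c hcmem
    have hc : c ^ δ = c := (Finset.mem_filter.mp hcmem).2
    have hA : c + u₀ ≠ 0 := hAne c hc
    have hB : c + u₀⁻¹ ≠ 0 := hBne c hc
    have hfrobq : (c + u₀) ^ q = c + u₀⁻¹ := by
      rw [hqpow, add_pow_char_pow, ← hqpow, hcq c hc, huq]
    have hAq1 : (c + u₀) ^ (q + 1) = (c + u₀⁻¹) * (c + u₀) := by
      rw [pow_succ, hfrobq]
    have hBδ : (c + u₀⁻¹) ^ δ = c + (u₀⁻¹) ^ δ := by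
      rw [hδ, add_pow_char_pow, ← hδ, hc]
    have hfeval : f.eval c
        = (c + u₀) ^ (δ - 1 - e) * ((c + (u₀⁻¹) ^ δ) * (c + u₀⁻¹) ^ (e - 1)) := by
      simp [hf]
    rw [hfeval, ← hBδ, huq, pow_mul, hAq1]
    have hBexp : (c + u₀⁻¹) ^ δ * (c + u₀⁻¹) ^ (e - 1) = (c + u₀⁻¹) ^ ((δ - 1) + e) := by
      rw [← pow_add]
      congr 1
      omega
    rw [hBexp]
    have hAe : (c + u₀) ^ (δ - 1 - e) * (c + u₀) ^ e = (c + u₀) ^ (δ - 1) := by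
      rw [← pow_add]
      congr 1
      omega
    rw [div_pow, div_eq_mul_inv, pow_add]
    calc ((c + u₀⁻¹) * (c + u₀)) ^ (δ - 1) * ((c + u₀⁻¹) ^ e * ((c + u₀) ^ e)⁻¹)
        = ((c + u₀) ^ (δ - 1 - e) * (c + u₀) ^ e) * (c + u₀⁻¹) ^ (δ - 1) *
            (c + u₀⁻¹) ^ e * ((c + u₀) ^ e)⁻¹ := by
          rw [hAe, mul_pow]
          ring
      _ = (c + u₀) ^ (δ - 1 - e) * ((c + u₀⁻¹) ^ (δ - 1) * (c + u₀⁻¹) ^ e) *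
            ((c + u₀) ^ e * ((c + u₀) ^ e)⁻¹) := by ring
      _ = (c + u₀) ^ (δ - 1 - e) * ((c + u₀⁻¹) ^ (δ - 1) * (c + u₀⁻¹) ^ e) := by
          rw [mul_inv_cancel₀ (pow_ne_zero e hA), mul_one]
  rw [Finset.sum_congr rfl hterm, aux_poly_sum δ hδ2 hdvd hδ0 f hmonic hdeg]
  ring
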